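/- For finite chains n_1,…,n_s, in the s-fold product of the category P_ℚ, the pair ((n_1,…,n_s), (ℚ,…,ℚ)) ≺ (n_1 + … + n_s, ℚ) in P_ℚ, via the concatenation map ψ(f_1,…,f_s) = f_1 ⊕ … ⊕ f_s, which is injective and satisfies ψ((h,…,h) ∘ (f_1,…,f_s)) = h ∘ ψ(f_1,…,f_s) for every embedding h : ℚ ↪ ℚ. -/

import Mathlib

/-- Post-composition of a partial map with an order embedding `h : ℚ ↪o ℚ`. -/
def pcomp (h : ℚ ↪o ℚ) {n : ℕ} (f : Fin n → Option ℚ) : Fin n → Option ℚ :=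
  fun i => (f i).map h

/-- Concatenation `f_1 ⊕ ⋯ ⊕ f_s` of partial maps `f_i : n_i ⇀ ℚ`:
the entry at position `n_1 + ⋯ + n_{j-1} + i` is `f_j i`. -/
def pconcat {s : ℕ} (n : Fin s → ℕ) (f : ∀ i, Fin (n i) → Option ℚ) :
    Fin (∑ i, n i) → Option ℚ :=
  fun j => ((List.ofFn fun i => List.ofFn (f i)).flatten).getD (j : ℕ) none

private lemma listL_length {s : ℕ} (n : Fin s → ℕ) (f : ∀ i, Fin (n i) → Option ℚ) :
    ((List.ofFn fun i => List.ofFn (f i)).flatten).length = ∑ i, n i := by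
  rw [List.length_flatten, List.map_ofFn]
  simp [List.sum_ofFn]

private lemma flatten_inj : ∀ {α : Type} (l1 l2 : List (List α)),
    l1.length = l2.length →
    (∀ i (h1 : i < l1.length) (h2 : i < l2.length), l1[i].length = l2[i].length) →
    l1.flatten = l2.flatten → l1 = l2 := by
  intro α l1
  induction l1 with
  | nil => intro l2 hl _ _; exact (List.length_eq_zero_iff.mp hl.symm).symm
  | cons a t ih =>
    intro l2 hl hlen hflat
    cases l2 with
    | nil => simp at hl
    | cons b t2 =>
      simp only [List.flatten_cons] at hflat
      have hab : a.length = b.length := hlen 0 (by simp) (by simp)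
      obtain ⟨h1, h2⟩ := List.append_inj hflat hab
      have := ih t2 (by simpa using hl)
        (fun i h1 h2 => by exact hlen (i+1) (by simpa using h1) (by simpa using h2)) h2
      rw [h1, this]

private lemma getD_map_optmap (h : ℚ → ℚ) (l : List (Option ℚ)) (j : ℕ) :
    (l.map (Option.map h)).getD j none = Option.map h (l.getD j none) := by
  simp only [List.getD_eq_getElem?_getD, List.getElem?_map]
  cases l[j]? <;> simp

/-- In the `s`-fold product of the category `P_ℚ`,
`((n_1,…,n_s), (ℚ,…,ℚ)) ≺ (n_1 + ⋯ + n_s, ℚ)`, via the concatenation map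
`ψ(f_1,…,f_s) = f_1 ⊕ ⋯ ⊕ f_s`, which is injective and satisfies
`ψ((h,…,h) ∘ (f_1,…,f_s)) = h ∘ ψ(f_1,…,f_s)`. -/
theorem pconcat_piggy {s : ℕ} (n : Fin s → ℕ) :
    Function.Injective (pconcat n) ∧
    (∀ (h : ℚ ↪o ℚ) (f : ∀ i, Fin (n i) → Option ℚ),
      pconcat n (fun i => pcomp h (f i)) = pcomp h (pconcat n f)) ∧
    ∃ (M : Set (Fin (∑ i, n i) → Option ℚ))
      (φ : M → ∀ i, Fin (n i) → Option ℚ),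
      ∀ h : ℚ ↪o ℚ, ∃ g : ∀ _ : Fin s, ℚ ↪o ℚ,
        {F : ∀ i, Fin (n i) → Option ℚ |
            ∃ f : ∀ i, Fin (n i) → Option ℚ, F = fun i => pcomp (g i) (f i)} ⊆
          φ '' {m : M | ∃ e : Fin (∑ i, n i) → Option ℚ, (m : _) = pcomp h e} := by
  have hinj : Function.Injective (pconcat n) := by
    intro f g hfg
    have hL : (List.ofFn fun i => List.ofFn (f i)).flatten
        = (List.ofFn fun i => List.ofFn (g i)).flatten := by
      apply List.ext_getElem
      · rw [listL_length, listL_length]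
      · intro j hj hj'
        have hjs : j < ∑ i, n i := by rwa [listL_length] at hj
        have := congrFun hfg ⟨j, hjs⟩
        simp only [pconcat, Fin.val_mk] at this
        rwa [List.getD_eq_getElem _ _ hj, List.getD_eq_getElem _ _ hj'] at this
    have hof : (List.ofFn fun i => List.ofFn (f i)) = (List.ofFn fun i => List.ofFn (g i)) := by
      apply flatten_inj _ _ (by simp)
      · intro i h1 h2
        simp only [List.getElem_ofFn]
        simp
      · exact hL
    funext i
    have h1 : (fun i => List.ofFn (f i)) = fun i => List.ofFn (g i) := List.ofFn_injective hof
    exact List.ofFn_injective (congrFun h1 i)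
  have hequiv : ∀ (h : ℚ ↪o ℚ) (f : ∀ i, Fin (n i) → Option ℚ),
      pconcat n (fun i => pcomp h (f i)) = pcomp h (pconcat n f) := by
    intro h f
    funext j
    have hmap : (List.ofFn fun i => List.ofFn (pcomp h (f i)))
        = (List.ofFn fun i => List.ofFn (f i)).map (List.map (Option.map h)) := by
      rw [List.map_ofFn]
      congr 1
      funext i
      exact (List.map_ofFn).symm
    simp only [pconcat, pcomp]
    rw [hmap, ← List.map_flatten, getD_map_optmap]
  refine ⟨hinj, hequiv, Set.range (pconcat n), fun m => m.2.choose, ?_⟩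
  intro h
  refine ⟨fun _ => h, ?_⟩
  rintro F ⟨f, rfl⟩
  refine ⟨⟨pconcat n fun i => pcomp h (f i), Set.mem_range_self _⟩,
    ⟨pconcat n f, by simp [hequiv h f]⟩, ?_⟩
  exact hinj (⟨pconcat n fun i => pcomp h (f i), Set.mem_range_self _⟩ :
    Set.range (pconcat n)).2.choose_spec
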